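/- Let G be a finite bipartite graph, φ a perfect fractional matching of G, and suppose the support supp(φ) = {e : 0 < φ(e) < 1} contains a cycle C. Then φ is not an extreme point of the perfect fractional matching polytope: there exists ε > 0 such that both φ + ζ and φ − ζ are perfect fractional matchings, where ζ is the alternating ε-circuit on C. -/

import Mathlib

open Finset

/-- A perfect fractional matching of a finite graph `G`. -/
def IsPerfectFractionalMatching {V : Type*} [Fintype V] [DecidableEq V]
    (G : SimpleGraph V) [DecidableRel G.Adj] (φ : Sym2 V → ℝ) : Prop :=
  (∀ e, 0 ≤ φ e ∧ φ e ≤ 1) ∧ (∀ e ∉ G.edgeFinset, φ e = 0) ∧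
    ∀ v : V, ∑ e ∈ G.edgeFinset.filter (fun e => v ∈ e), φ e = 1

/-- The alternating `ε`-circuit on a cycle `c` (the distinguished edge is the first
edge of `c`): `ε` on even-position edges of `c`, `-ε` on odd-position edges, `0`
elsewhere. -/
noncomputable def altCircuit {V : Type*} [DecidableEq V] {G : SimpleGraph V} {v : V}
    (c : G.Walk v v) (ε : ℝ) : Sym2 V → ℝ :=
  fun e => if e ∈ c.edges then ε * (-1 : ℝ) ^ (c.edges.idxOf e) else 0

/-- Closed walks in a bipartite graph have even length. -/
lemma walk_even_length_aux {V : Type*} {G : SimpleGraph V} (hbip : G.Colorable 2)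
    {v : V} (c : G.Walk v v) : Even c.length := by
  obtain ⟨C⟩ := hbip
  have step : ∀ a b : Fin 2, a ≠ b → ((b.val : ZMod 2)) = (a.val : ZMod 2) + 1 := by decide
  have key : ∀ {a b : V} (p : G.Walk a b),
      ((C b).val : ZMod 2) = (C a).val + p.length := by
    intro a b p
    induction p with
    | nil => simp
    | @cons x y z h p ih =>
      rw [SimpleGraph.Walk.length_cons, ih, step _ _ (C.valid h)]
      push_cast
      ring
  have h0 : ((c.length : ℕ) : ZMod 2) = 0 := by
    have := key c
    exact (left_eq_add.mp this)
  rw [even_iff_two_dvd]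
  exact (ZMod.natCast_eq_zero_iff c.length 2).mp h0

/-- Alternating signed incidence sum along a list of edges. -/
noncomputable def altSum {V : Type*} [DecidableEq V] (w : V) : List (Sym2 V) → ℝ
  | [] => 0
  | e :: L => (if w ∈ e then 1 else 0) - altSum w L

lemma altSum_walk {V : Type*} [DecidableEq V] {G : SimpleGraph V} (w : V)
    {a b : V} (p : G.Walk a b) :
    altSum w p.edges =
      (if w = a then 1 else 0) - (-1 : ℝ) ^ p.length * (if w = b then 1 else 0) := by
  induction p with
  | nil => simp [altSum]
  | @cons x y z h p ih =>
    rw [SimpleGraph.Walk.edges_cons]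
    have hxy : x ≠ y := h.ne
    have hmem : (if w ∈ s(x, y) then (1 : ℝ) else 0)
        = (if w = x then 1 else 0) + (if w = y then 1 else 0) := by
      by_cases h1 : w = x <;> by_cases h2 : w = y <;>
        simp_all [Sym2.mem_iff]
    show (if w ∈ s(x, y) then (1 : ℝ) else 0) - altSum w p.edges = _
    rw [hmem, ih, SimpleGraph.Walk.length_cons]
    ring

lemma sum_toFinset_altSum {V : Type*} [DecidableEq V] (w : V) :
    ∀ (L : List (Sym2 V)), L.Nodup →
      ∑ e ∈ L.toFinset, (if w ∈ e then ((-1 : ℝ)) ^ (L.idxOf e) else 0) = altSum w L := by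
  intro L
  induction L with
  | nil => simp [altSum]
  | cons e L ih =>
    intro hnd
    obtain ⟨hmem, hnd'⟩ := List.nodup_cons.mp hnd
    rw [List.toFinset_cons, Finset.sum_insert (by simpa using hmem)]
    have h1 : ∀ e' ∈ L.toFinset, (if w ∈ e' then ((-1 : ℝ)) ^ ((e :: L).idxOf e') else 0)
        = -(if w ∈ e' then ((-1 : ℝ)) ^ (L.idxOf e') else 0) := by
      intro e' he'
      have hne : e' ≠ e := fun h => hmem (h ▸ List.mem_toFinset.mp he')
      rw [List.idxOf_cons_ne _ hne.symm, Nat.succ_eq_add_one, pow_succ]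
      split_ifs <;> ring
    rw [Finset.sum_congr rfl h1, Finset.sum_neg_distrib, ih hnd']
    simp only [altSum, List.idxOf_cons_self, pow_zero]
    ring

/-- If the support `{e : 0 < φ e < 1}` of a perfect fractional matching `φ` of a
finite bipartite graph contains a cycle `c`, then `φ` is not an extreme point of the
perfect fractional matching polytope: for some `ε > 0`, both `φ + ζ` and `φ - ζ`
are perfect fractional matchings, where `ζ` is the alternating `ε`-circuit on `c`. -/
theorem stmt_4 {V : Type*} [Fintype V] [DecidableEq V] (G : SimpleGraph V)
    [DecidableRel G.Adj] (hbip : G.Colorable 2)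
    (φ : Sym2 V → ℝ) (hφ : IsPerfectFractionalMatching G φ)
    {v : V} (c : G.Walk v v) (hc : c.IsCycle)
    (hsupp : ∀ e ∈ c.edges, 0 < φ e ∧ φ e < 1) :
    φ ∉ Set.extremePoints ℝ {ψ : Sym2 V → ℝ | IsPerfectFractionalMatching G ψ} ∧
    ∃ ε : ℝ, 0 < ε ∧
      IsPerfectFractionalMatching G (φ + altCircuit c ε) ∧
      IsPerfectFractionalMatching G (φ - altCircuit c ε) := by
  have heven : Even c.length := walk_even_length_aux hbip c
  have hsub : c.edges.toFinset ⊆ G.edgeFinset := fun e he =>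
    SimpleGraph.mem_edgeFinset.mpr (c.edges_subset_edgeSet (List.mem_toFinset.mp he))
  -- the alternating circuit sums to zero at every vertex
  have hvsum : ∀ (ε : ℝ) (w : V),
      ∑ e ∈ G.edgeFinset.filter (fun e => w ∈ e), altCircuit c ε e = 0 := by
    intro ε w
    rw [Finset.sum_filter]
    rw [← Finset.sum_subset hsub (fun e _ he => by
      have h : e ∉ c.edges := fun h => he (List.mem_toFinset.mpr h)
      simp [altCircuit, h])]
    have hcongr : ∀ e ∈ c.edges.toFinset, (if w ∈ e then altCircuit c ε e else 0)
        = ε * (if w ∈ e then ((-1 : ℝ)) ^ (c.edges.idxOf e) else 0) := by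
      intro e he
      have h : e ∈ c.edges := List.mem_toFinset.mp he
      simp only [altCircuit, if_pos h]
      split_ifs <;> ring
    rw [Finset.sum_congr rfl hcongr, ← Finset.mul_sum,
      sum_toFinset_altSum w c.edges hc.edges_nodup, altSum_walk w c, heven.neg_one_pow]
    split_ifs <;> ring
  -- choose ε
  have hlen : 0 < c.length := by
    have := hc.three_le_length
    omega
  have hene : c.edges ≠ [] := by
    intro h
    have := SimpleGraph.Walk.length_edges c
    rw [h] at this
    simp at this
    omega
  obtain ⟨e₀, he₀⟩ := List.exists_mem_of_ne_nil c.edges hene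
  set ε := (c.edges.toFinset).inf' ⟨e₀, List.mem_toFinset.mpr he₀⟩
    (fun e => min (φ e) (1 - φ e)) with hεdef
  have hεpos : 0 < ε := by
    rw [hεdef]; refine (Finset.lt_inf'_iff _).mpr ?_
    intro e he
    obtain ⟨h1, h2⟩ := hsupp e (List.mem_toFinset.mp he)
    exact lt_min h1 (by linarith)
  have hεle : ∀ e ∈ c.edges, ε ≤ φ e ∧ ε ≤ 1 - φ e := fun e he =>
    ⟨le_trans (Finset.inf'_le _ (List.mem_toFinset.mpr he)) (min_le_left _ _),
     le_trans (Finset.inf'_le _ (List.mem_toFinset.mpr he)) (min_le_right _ _)⟩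
  have hz0 : ∀ e, e ∉ c.edges → altCircuit c ε e = 0 := fun e he => by
    simp [altCircuit, he]
  have hz1 : ∀ e ∈ c.edges, altCircuit c ε e = ε ∨ altCircuit c ε e = -ε := by
    intro e he
    simp only [altCircuit, if_pos he]
    rcases Nat.even_or_odd (c.edges.idxOf e) with h | h
    · left; rw [h.neg_one_pow]; ring
    · right; rw [h.neg_one_pow]; ring
  -- generic perturbation lemma
  have key : ∀ ζ : Sym2 V → ℝ, (∀ e, e ∉ c.edges → ζ e = 0) →
      (∀ e ∈ c.edges, ζ e = ε ∨ ζ e = -ε) →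
      (∀ w, ∑ e ∈ G.edgeFinset.filter (fun e => w ∈ e), ζ e = 0) →
      IsPerfectFractionalMatching G (φ + ζ) := by
    intro ζ hζ0 hζ1 hζs
    obtain ⟨hb, h0, hs⟩ := hφ
    refine ⟨fun e => ?_, fun e he => ?_, fun w => ?_⟩
    · by_cases he : e ∈ c.edges
      · obtain ⟨l1, l2⟩ := hεle e he
        obtain ⟨b1, b2⟩ := hb e
        rcases hζ1 e he with h | h <;>
          simp only [Pi.add_apply, h] <;> constructor <;> linarith
      · obtain ⟨b1, b2⟩ := hb e
        simp only [Pi.add_apply, hζ0 e he, add_zero]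
        exact ⟨b1, b2⟩
    · have hne : e ∉ c.edges := fun h =>
        he (SimpleGraph.mem_edgeFinset.mpr (c.edges_subset_edgeSet h))
      simp [Pi.add_apply, hζ0 e hne, h0 e he]
    · simp only [Pi.add_apply]
      rw [Finset.sum_add_distrib, hs w, hζs w, add_zero]
  have H1 : IsPerfectFractionalMatching G (φ + altCircuit c ε) :=
    key _ hz0 hz1 (hvsum ε)
  have H2 : IsPerfectFractionalMatching G (φ - altCircuit c ε) := by
    have := key (-(altCircuit c ε))
      (fun e he => by simp [hz0 e he])
      (fun e he => by
        rcases hz1 e he with h | h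
        · right; simp [Pi.neg_apply, h]
        · left; simp [Pi.neg_apply, h])
      (fun w => by
        simp only [Pi.neg_apply]
        rw [Finset.sum_neg_distrib, hvsum ε w, neg_zero])
    rwa [sub_eq_add_neg]
  refine ⟨?_, ε, hεpos, H1, H2⟩
  rintro ⟨-, hext⟩
  have hseg : φ ∈ openSegment ℝ (φ + altCircuit c ε) (φ - altCircuit c ε) := by
    refine ⟨1/2, 1/2, by norm_num, by norm_num, by norm_num, ?_⟩
    funext e
    simp only [Pi.add_apply, Pi.sub_apply, Pi.smul_apply, smul_eq_mul]
    ring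
  have heq := hext H1 H2 hseg
  have h0 : altCircuit c ε e₀ = 0 := by
    have := congrFun heq e₀
    simp only [Pi.add_apply] at this
    linarith
  rcases hz1 e₀ he₀ with h | h <;> rw [h] at h0 <;> linarith
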